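/- Let Ω ⊆ ℝ² be open, ω, c > 0. Let v : Ω → ℂ² be three times continuously differentiable with curl₂D v = 0, set p := −(i c²/ω) div v, and let v₂ : Ω → ℂ² be twice continuously differentiable, p₂ : Ω → ℂ continuously differentiable, satisfying on Ω: −2iω v₂ + ∇p₂ = −(1/2)(v·∇)v and −2iω p₂ + c² div v₂ = −(1/2) div(p v). Then p₂ satisfies on Ω: Δp₂ + (4ω²/c²) p₂ = −(1/4) Δ(v·v) − (iω/c²) div(p v), where v·v = v₁² + v₂² is the complex-bilinear square. -/

import Mathlib

noncomputable section

/-- Points of the plane. -/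
abbrev Pt : Type := Fin 2 → ℝ

/-- Partial derivative `∂ᵢ g` of a complex-valued function on the plane. -/
def pd (i : Fin 2) (g : Pt → ℂ) (x : Pt) : ℂ := fderiv ℝ g x (Pi.single i 1)

/-- Divergence of a planar complex vector field. -/
def vdiv (v : Pt → Fin 2 → ℂ) (x : Pt) : ℂ := ∑ i, pd i (fun y => v y i) x

/-- Laplacian of a complex-valued function on the plane. -/
def lap (g : Pt → ℂ) (x : Pt) : ℂ := ∑ i, pd i (fun y => pd i g y) x

/-- Advection term `(u·∇)w` (j-th component). -/
def adv (u w : Pt → Fin 2 → ℂ) (x : Pt) (j : Fin 2) : ℂ :=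
  ∑ i, u x i * pd i (fun y => w y j) x

/-- Two-dimensional curl `∂₁u₂ − ∂₂u₁`. -/
def curl2D (v : Pt → Fin 2 → ℂ) (x : Pt) : ℂ :=
  pd 0 (fun y => v y 1) x - pd 1 (fun y => v y 0) x

lemma pd_congr {Ω : Set Pt} (hΩ : IsOpen Ω) {x : Pt} (hx : x ∈ Ω) {f g : Pt → ℂ}
    (h : ∀ y ∈ Ω, f y = g y) (i : Fin 2) : pd i f x = pd i g x := by
  unfold pd
  rw [Filter.EventuallyEq.fderiv_eq (Filter.eventuallyEq_of_mem (hΩ.mem_nhds hx) h)]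

lemma pd_add {f g : Pt → ℂ} {x : Pt} (hf : DifferentiableAt ℝ f x)
    (hg : DifferentiableAt ℝ g x) (i : Fin 2) :
    pd i (fun y => f y + g y) x = pd i f x + pd i g x := by
  unfold pd; rw [fderiv_fun_add hf hg]; rfl

lemma pd_sub {f g : Pt → ℂ} {x : Pt} (hf : DifferentiableAt ℝ f x)
    (hg : DifferentiableAt ℝ g x) (i : Fin 2) :
    pd i (fun y => f y - g y) x = pd i f x - pd i g x := by
  unfold pd; rw [fderiv_fun_sub hf hg]; rfl

lemma pd_const_mul {f : Pt → ℂ} {x : Pt} (hf : DifferentiableAt ℝ f x) (a : ℂ) (i : Fin 2) :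
    pd i (fun y => a * f y) x = a * pd i f x := by
  unfold pd; rw [fderiv_const_mul hf]; rfl

lemma pd_mul {f g : Pt → ℂ} {x : Pt} (hf : DifferentiableAt ℝ f x)
    (hg : DifferentiableAt ℝ g x) (i : Fin 2) :
    pd i (fun y => f y * g y) x = f x * pd i g x + g x * pd i f x := by
  unfold pd; rw [fderiv_fun_mul hf hg]; simp [smul_eq_mul]

/-- let `v` be C³ and curl-free on open `Ω ⊆ ℝ²`, `p := −(ic²/ω) div v`,
and let `(v₂, p₂)` satisfy the second-harmonic system `−2iω v₂ + ∇p₂ = −(1/2)(v·∇)v`,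
`−2iω p₂ + c² div v₂ = −(1/2) div(p v)` on `Ω`. Then
`Δp₂ + (4ω²/c²) p₂ = −(1/4)Δ(v·v) − (iω/c²) div(p v)` on `Ω`. -/
theorem stmt_16 (Ω : Set Pt) (hΩ : IsOpen Ω) (ω c : ℝ) (hω : 0 < ω) (hc : 0 < c)
    (v : Pt → Fin 2 → ℂ) (hv : ContDiffOn ℝ 3 v Ω)
    (hcurl : ∀ x ∈ Ω, curl2D v x = 0)
    (p : Pt → ℂ) (hp : ∀ x, p x = -(Complex.I * c ^ 2 / ω) * vdiv v x)
    (v₂ : Pt → Fin 2 → ℂ) (hv₂ : ContDiffOn ℝ 2 v₂ Ω)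
    (p₂ : Pt → ℂ) (hp₂ : ContDiffOn ℝ 1 p₂ Ω)
    (hmom : ∀ x ∈ Ω, ∀ j : Fin 2,
      -2 * Complex.I * ω * v₂ x j + pd j p₂ x = -(1 / 2) * adv v v x j)
    (hcont : ∀ x ∈ Ω,
      -2 * Complex.I * ω * p₂ x + c ^ 2 * vdiv v₂ x
        = -(1 / 2) * vdiv (fun y i => p y * v y i) x) :
    ∀ x ∈ Ω,
      lap p₂ x + (4 * (ω : ℂ) ^ 2 / c ^ 2) * p₂ x
        = -(1 / 4) * lap (fun y => ∑ i, v y i * v y i) x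
          - Complex.I * ω / c ^ 2 * vdiv (fun y i => p y * v y i) x := by
  set q : Pt → ℂ := fun y => ∑ i, v y i * v y i with hqdef
  -- differentiability of components of v
  have hvc : ∀ (i : Fin 2), ∀ y ∈ Ω, DifferentiableAt ℝ (fun z => v z i) y := by
    intro i y hy
    exact (contDiffAt_pi.mp (hv.contDiffAt (hΩ.mem_nhds hy)) i).differentiableAt (by norm_num)
  -- q is C³ on Ω
  have hqc : ContDiffOn ℝ 3 q Ω := by
    have h : ∀ i : Fin 2, ContDiffOn ℝ 3 (fun y => v y i) Ω := by
      intro i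
      exact (ContinuousLinearMap.proj i : (Fin 2 → ℂ) →L[ℝ] ℂ).contDiff.comp_contDiffOn hv
    have : q = fun y => v y 0 * v y 0 + v y 1 * v y 1 := by
      funext y; simp [hqdef, Fin.sum_univ_two]
    rw [this]
    exact ((h 0).mul (h 0)).add ((h 1).mul (h 1))
  -- pd j q is C² on Ω
  have hpdq : ∀ j : Fin 2, ContDiffOn ℝ 2 (pd j q) Ω := by
    intro j
    exact (hqc.fderiv_of_isOpen (m := 2) hΩ (by norm_num)).clm_apply
      (contDiffOn_const (c := (Pi.single j 1 : Pt)))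
  -- Step A : adv v v = (1/2) ∇(v·v) on Ω
  have hadv : ∀ y ∈ Ω, ∀ j : Fin 2, adv v v y j = (1 / 2) * pd j q y := by
    intro y hy j
    have h0 := hvc 0 y hy
    have h1 := hvc 1 y hy
    have hqe : q = fun z => v z 0 * v z 0 + v z 1 * v z 1 := by
      funext z; simp [hqdef, Fin.sum_univ_two]
    have hpq : pd j q y
        = (v y 0 * pd j (fun z => v z 0) y + v y 0 * pd j (fun z => v z 0) y)
          + (v y 1 * pd j (fun z => v z 1) y + v y 1 * pd j (fun z => v z 1) y) := by
      rw [hqe, pd_add (h0.fun_mul h0) (h1.fun_mul h1), pd_mul h0 h0, pd_mul h1 h1]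
    have hcu : pd 0 (fun z => v z 1) y = pd 1 (fun z => v z 0) y := by
      have h := hcurl y hy
      unfold curl2D at h
      linear_combination h
    have hsym : ∀ i j : Fin 2, pd i (fun z => v z j) y = pd j (fun z => v z i) y := by
      intro i j
      fin_cases i <;> fin_cases j
      · rfl
      · exact hcu
      · exact hcu.symm
      · rfl
    simp only [adv, Fin.sum_univ_two]
    rw [hsym 0 j, hsym 1 j, hpq]
    ring
  -- from momentum equation
  have h1 : ∀ y ∈ Ω, ∀ j : Fin 2,
      pd j p₂ y = 2 * Complex.I * ω * v₂ y j - (1 / 4) * pd j q y := by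
    intro y hy j
    have h := hmom y hy j
    rw [hadv y hy j] at h
    linear_combination h
  intro x hx
  have hnx := hΩ.mem_nhds hx
  have hv₂c : ∀ j : Fin 2, DifferentiableAt ℝ (fun z => v₂ z j) x := by
    intro j
    exact (contDiffAt_pi.mp (hv₂.contDiffAt hnx) j).differentiableAt (by norm_num)
  have hpdqd : ∀ j : Fin 2, DifferentiableAt ℝ (pd j q) x := by
    intro j
    exact ((hpdq j).contDiffAt hnx).differentiableAt (by norm_num)
  have hB : ∀ j : Fin 2, pd j (fun y => pd j p₂ y) x
      = 2 * Complex.I * ω * pd j (fun y => v₂ y j) x - (1 / 4) * pd j (pd j q) x := by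
    intro j
    rw [pd_congr hΩ hx (fun y hy => h1 y hy j) j,
      pd_sub ((hv₂c j).const_mul _) ((hpdqd j).const_mul _),
      pd_const_mul (hv₂c j), pd_const_mul (hpdqd j)]
  have hlapq : lap q x = ∑ j : Fin 2, pd j (pd j q) x := rfl
  have hlap : lap p₂ x = 2 * Complex.I * ω * vdiv v₂ x - (1 / 4) * lap q x := by
    simp only [lap, vdiv, Fin.sum_univ_two, hB]
    ring
  have hct := hcont x hx
  have hc' : (c : ℂ) ≠ 0 := by exact_mod_cast hc.ne'
  rw [hlap]
  field_simp
  linear_combination (8 * Complex.I * (ω : ℂ)) * hct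
    + (16 * (ω : ℂ) ^ 2 * p₂ x) * Complex.I_sq


end
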